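/- arXiv:2408.08825 — 3 statements merged into one kernel-verified Lean document; each statement's English description precedes it below -/
import Mathlib

section
/- Let T>0, c₁>0 and α∈(0,1). Then for all sufficiently large ℓ>0 there exists τ=τ(c₁,ℓ,α)∈(0,T) such that for all t∈[τ,T), ∫ₜ^T |t−s|^{−α} (1/(T−s))^{2(1−α)} e^{−ℓ/(T−s)} ds ≤ c₁ e^{−ℓ/(T−t)}. -/
open MeasureTheory Real Set

lemma merle_aux0 {β y : ℝ} (hβ : 0 < β) (hy : 0 ≤ y) :
    y ^ β * Real.exp (-y) ≤ (β / Real.exp 1) ^ β := by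
  rcases eq_or_lt_of_le hy with h | h
  · rw [← h, Real.zero_rpow hβ.ne', zero_mul]
    positivity
  · have h1 : y * Real.exp (-(y / β)) ≤ β / Real.exp 1 := by
      have hz : y / β ≤ Real.exp (y / β - 1) := by
        have := Real.add_one_le_exp (y / β - 1)
        linarith
      have h2 : y * Real.exp (-(y / β)) = β * ((y / β) * Real.exp (-(y / β))) := by
        field_simp
      rw [h2]
      have h3 : (y / β) * Real.exp (-(y / β)) ≤ Real.exp (y / β - 1) * Real.exp (-(y / β)) := by
        apply mul_le_mul_of_nonneg_right hz (Real.exp_pos _).le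
      have h4 : Real.exp (y / β - 1) * Real.exp (-(y / β)) = Real.exp (-1) := by
        rw [← Real.exp_add]; ring_nf
      rw [h4] at h3
      have h5 : β * ((y / β) * Real.exp (-(y / β))) ≤ β * Real.exp (-1) :=
        mul_le_mul_of_nonneg_left h3 hβ.le
      have h6 : β * Real.exp (-1) = β / Real.exp 1 := by
        rw [Real.exp_neg]; ring
      linarith
    have key : y ^ β * Real.exp (-y) = (y * Real.exp (-(y / β))) ^ β := by
      rw [Real.mul_rpow h.le (Real.exp_pos _).le, ← Real.exp_mul]
      congr 2
      field_simp
    rw [key]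
    exact Real.rpow_le_rpow (by positivity) h1 hβ.le

lemma merle_aux1 {β x m : ℝ} (hβ : 0 < β) (hx : 0 < x) (hm : 0 < m) :
    x ^ (-β) * Real.exp (-(m / x)) ≤ (β / (m * Real.exp 1)) ^ β := by
  have hy : 0 < m / x := by positivity
  have h0 := merle_aux0 hβ hy.le
  have hx' : x ^ (-β) = (m / x) ^ β * (m ^ β)⁻¹ := by
    rw [Real.div_rpow hm.le hx.le, Real.rpow_neg hx.le]
    field_simp
  have hrhs : (β / (m * Real.exp 1)) ^ β = (β / Real.exp 1) ^ β * (m ^ β)⁻¹ := by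
    rw [Real.div_rpow hβ.le (by positivity), Real.div_rpow hβ.le (Real.exp_pos _).le,
      Real.mul_rpow hm.le (Real.exp_pos _).le]
    ring
  rw [hx', hrhs]
  have : (m / x) ^ β * (m ^ β)⁻¹ * Real.exp (-(m / x))
      = ((m / x) ^ β * Real.exp (-(m / x))) * (m ^ β)⁻¹ := by ring
  rw [this]
  apply mul_le_mul_of_nonneg_right h0
  positivity

set_option maxHeartbeats 1000000 in
theorem merle_numerical_lemma (T c₁ α : ℝ) (hT : 0 < T) (hc₁ : 0 < c₁)
    (hα : α ∈ Set.Ioo (0:ℝ) 1) :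
    ∃ ℓ₀ : ℝ, ∀ ℓ ≥ ℓ₀, ∃ τ ∈ Set.Ioo 0 T, ∀ t ∈ Set.Ico τ T,
      (∫ s in Set.Ioo t T,
          |t - s| ^ (-α) * (1 / (T - s)) ^ (2 * (1 - α)) * Real.exp (-ℓ / (T - s)))
        ≤ c₁ * Real.exp (-ℓ / (T - t)) := by
  obtain ⟨hα0, hα1⟩ := hα
  have h1α : 0 < 1 - α := by linarith
  set β : ℝ := 2 * (1 - α) with hβdef
  have hβ : 0 < β := by positivity
  set A : ℝ := 2 ^ β * Real.Gamma (1 - α) with hA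
  set Bc : ℝ := 2 * (T / 2) ^ (1 - α) * (2 * β / Real.exp 1) ^ β with hB
  have hA0 : 0 ≤ A := by positivity
  have hB0 : 0 ≤ Bc := by positivity
  have htend : Filter.Tendsto (fun ℓ : ℝ => A * ℓ ^ (α - 1) + Bc * ℓ ^ (-β))
      Filter.atTop (nhds 0) := by
    have t1 : Filter.Tendsto (fun ℓ : ℝ => ℓ ^ (α - 1)) Filter.atTop (nhds 0) := by
      have := tendsto_rpow_neg_atTop h1α
      simpa [neg_sub] using this
    have t2 := tendsto_rpow_neg_atTop hβ
    have := (t1.const_mul A).add (t2.const_mul Bc)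
    simpa using this
  have hev : ∀ᶠ ℓ in Filter.atTop,
      (A * ℓ ^ (α - 1) + Bc * ℓ ^ (-β) ≤ c₁) ∧ 1 ≤ ℓ :=
    (htend.eventually (eventually_le_nhds hc₁)).and (Filter.eventually_ge_atTop 1)
  obtain ⟨ℓ₀, hℓ₀⟩ := Filter.eventually_atTop.mp hev
  refine ⟨ℓ₀, fun ℓ hℓ => ?_⟩
  obtain ⟨hφ, hℓ1⟩ := hℓ₀ ℓ hℓ
  have hℓpos : (0:ℝ) < ℓ := lt_of_lt_of_le one_pos hℓ1
  refine ⟨T / 2, ⟨by linarith, by linarith⟩, fun t ht => ?_⟩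
  obtain ⟨htτ, htT⟩ := ht
  set δ : ℝ := T - t with hδdef
  have hδ : 0 < δ := by simp only [hδdef]; linarith
  have hδT : δ ≤ T := by simp only [hδdef]; linarith
  set c : ℝ := ℓ / δ ^ 2 with hcdef
  have hc : 0 < c := by positivity
  set C₂ : ℝ := (δ / 2) ^ (-α) * (2 * β / (ℓ * Real.exp 1)) ^ β with hC2
  have hC2nn : 0 ≤ C₂ := by positivity
  set F : ℝ → ℝ := fun u => u ^ (-α) * Real.exp (-(c * u)) with hF
  set g : ℝ → ℝ := fun s => Real.exp (-ℓ / δ) * ((δ / 2) ^ (-β) * F (s - t) + C₂) with hg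
  -- integrability of F on Ioi 0
  have hbase : IntegrableOn (fun u : ℝ => Real.exp (-u) * u ^ ((1 - α) - 1)) (Ioi 0) :=
    Real.GammaIntegral_convergent h1α
  have hcomp : IntegrableOn (fun u : ℝ => Real.exp (-(c * u)) * (c * u) ^ ((1 - α) - 1))
      (Ioi 0) := by
    have := (integrableOn_Ioi_comp_mul_left_iff
      (fun u : ℝ => Real.exp (-u) * u ^ ((1 - α) - 1)) 0 hc).mpr
    rw [mul_zero] at this
    exact this hbase
  have hFint : IntegrableOn F (Ioi 0) := by
    have key : ∀ u ∈ Ioi (0:ℝ),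
        c ^ α * (Real.exp (-(c * u)) * (c * u) ^ ((1 - α) - 1)) = F u := by
      intro u hu
      have hu0 : (0:ℝ) < u := hu
      have he : ((1:ℝ) - α) - 1 = -α := by ring
      rw [he, Real.mul_rpow hc.le hu0.le]
      have hcc : c ^ α * c ^ (-α) = 1 := by
        rw [← Real.rpow_add hc]; simp
      have : c ^ α * (Real.exp (-(c * u)) * (c ^ (-α) * u ^ (-α)))
          = (c ^ α * c ^ (-α)) * (u ^ (-α) * Real.exp (-(c * u))) := by ring
      rw [this, hcc, one_mul, hF]
    exact IntegrableOn.congr_fun (hcomp.const_mul _) key measurableSet_Ioi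
  -- translate
  have hmp : MeasurePreserving (fun u : ℝ => u + t) volume volume :=
    measurePreserving_add_right volume t
  have hemb : MeasurableEmbedding (fun u : ℝ => u + t) :=
    (MeasurableEquiv.addRight t).measurableEmbedding
  have hpre : (fun u : ℝ => u + t) ⁻¹' (Ioi t) = Ioi 0 := by
    ext x; simp
  have hFt : IntegrableOn (fun s : ℝ => F (s - t)) (Ioi t) := by
    apply (hmp.integrableOn_comp_preimage hemb).mp
    rw [hpre]
    apply hFint.congr_fun _ measurableSet_Ioi
    intro u _
    simp [Function.comp]
  have hFtI : IntegrableOn (fun s : ℝ => F (s - t)) (Ioo t T) :=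
    hFt.mono_set Ioo_subset_Ioi_self
  have hIooI : IntegrableOn (fun _ : ℝ => C₂) (Ioo t T) :=
    integrableOn_const (by rw [Real.volume_Ioo]; exact ENNReal.ofReal_ne_top)
  have hgint : IntegrableOn g (Ioo t T) := by
    apply Integrable.const_mul
    exact (hFtI.const_mul _).add hIooI
  -- pointwise bound
  have hpt : ∀ s ∈ Ioo t T,
      |t - s| ^ (-α) * (1 / (T - s)) ^ β * Real.exp (-ℓ / (T - s)) ≤ g s := by
    intro s hs
    obtain ⟨hts, hsT⟩ := hs
    have hst : 0 < s - t := sub_pos.2 hts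
    have hTs : 0 < T - s := sub_pos.2 hsT
    have hTsδ : T - s ≤ δ := by simp only [hδdef]; linarith
    have habs : |t - s| = s - t := by
      rw [abs_sub_comm, abs_of_pos hst]
    have hone : (1 / (T - s)) ^ β = (T - s) ^ (-β) := by
      rw [one_div, Real.inv_rpow hTs.le, ← Real.rpow_neg hTs.le]
    have hexp : Real.exp (-ℓ / (T - s))
        = Real.exp (-ℓ / δ) * Real.exp (-(ℓ * (s - t) / ((T - s) * δ))) := by
      rw [← Real.exp_add]
      congr 1
      field_simp
      ring
    rw [habs, hone, hexp]
    have key : (s - t) ^ (-α) * (T - s) ^ (-β) * Real.exp (-(ℓ * (s - t) / ((T - s) * δ)))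
        ≤ (δ / 2) ^ (-β) * F (s - t) + C₂ := by
      rcases le_or_gt (s - t) (δ / 2) with hcase | hcase
      · -- near t
        have hTs2 : δ / 2 ≤ T - s := by simp only [hδdef] at *; linarith
        have b1 : (T - s) ^ (-β) ≤ (δ / 2) ^ (-β) :=
          Real.rpow_le_rpow_of_nonpos (by positivity) hTs2 (neg_nonpos.2 hβ.le)
        have b2 : Real.exp (-(ℓ * (s - t) / ((T - s) * δ))) ≤ Real.exp (-(c * (s - t))) := by
          apply Real.exp_le_exp.2
          rw [neg_le_neg_iff]
          have hδ2 : c * (s - t) = ℓ * (s - t) / δ ^ 2 := by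
            rw [hcdef]; ring
          rw [hδ2]
          apply div_le_div_of_nonneg_left (by positivity) (by positivity)
          nlinarith
        calc (s - t) ^ (-α) * (T - s) ^ (-β) * Real.exp (-(ℓ * (s - t) / ((T - s) * δ)))
            ≤ (s - t) ^ (-α) * (δ / 2) ^ (-β) * Real.exp (-(c * (s - t))) := by
              apply mul_le_mul
              · exact mul_le_mul_of_nonneg_left b1 (by positivity)
              · exact b2
              · positivity
              · positivity
          _ = (δ / 2) ^ (-β) * F (s - t) := by rw [hF]; ring
          _ ≤ (δ / 2) ^ (-β) * F (s - t) + C₂ := le_add_of_nonneg_right hC2nn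
      · -- near T
        have b1 : (s - t) ^ (-α) ≤ (δ / 2) ^ (-α) :=
          Real.rpow_le_rpow_of_nonpos (by positivity) hcase.le (neg_nonpos.2 hα0.le)
        have b2 : Real.exp (-(ℓ * (s - t) / ((T - s) * δ)))
            ≤ Real.exp (-((ℓ / 2) / (T - s))) := by
          apply Real.exp_le_exp.2
          rw [neg_le_neg_iff, div_le_div_iff₀ hTs (by positivity)]
          nlinarith [mul_nonneg (mul_nonneg hℓpos.le hTs.le)
            (by linarith : (0:ℝ) ≤ (s - t) - δ / 2)]
        have b3 : (T - s) ^ (-β) * Real.exp (-((ℓ / 2) / (T - s)))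
            ≤ (2 * β / (ℓ * Real.exp 1)) ^ β := by
          have h := merle_aux1 hβ hTs (by positivity : (0:ℝ) < ℓ / 2)
          have heq : (β / (ℓ / 2 * Real.exp 1)) ^ β = (2 * β / (ℓ * Real.exp 1)) ^ β := by
            congr 1
            field_simp
          rw [heq] at h
          exact h
        calc (s - t) ^ (-α) * (T - s) ^ (-β) * Real.exp (-(ℓ * (s - t) / ((T - s) * δ)))
            = (s - t) ^ (-α) * ((T - s) ^ (-β) * Real.exp (-(ℓ * (s - t) / ((T - s) * δ)))) := by
              ring
          _ ≤ (δ / 2) ^ (-α) * ((2 * β / (ℓ * Real.exp 1)) ^ β) := by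
              apply mul_le_mul b1 _ _ (by positivity)
              · calc (T - s) ^ (-β) * Real.exp (-(ℓ * (s - t) / ((T - s) * δ)))
                    ≤ (T - s) ^ (-β) * Real.exp (-((ℓ / 2) / (T - s))) :=
                      mul_le_mul_of_nonneg_left b2 (by positivity)
                  _ ≤ (2 * β / (ℓ * Real.exp 1)) ^ β := b3
              · positivity
          _ = C₂ := by rw [hC2]
          _ ≤ (δ / 2) ^ (-β) * F (s - t) + C₂ := by
              apply le_add_of_nonneg_left
              have : 0 ≤ F (s - t) := by rw [hF]; positivity
              positivity
    calc (s - t) ^ (-α) * (T - s) ^ (-β)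
          * (Real.exp (-ℓ / δ) * Real.exp (-(ℓ * (s - t) / ((T - s) * δ))))
        = Real.exp (-ℓ / δ)
          * ((s - t) ^ (-α) * (T - s) ^ (-β) * Real.exp (-(ℓ * (s - t) / ((T - s) * δ)))) := by
          ring
      _ ≤ Real.exp (-ℓ / δ) * ((δ / 2) ^ (-β) * F (s - t) + C₂) :=
          mul_le_mul_of_nonneg_left key (Real.exp_pos _).le
      _ = g s := by rw [hg]
  -- integral comparison
  have hmono : (∫ s in Ioo t T,
      |t - s| ^ (-α) * (1 / (T - s)) ^ β * Real.exp (-ℓ / (T - s)))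
      ≤ ∫ s in Ioo t T, g s := by
    apply integral_mono_of_nonneg
    · rw [Filter.EventuallyLE, ae_restrict_iff' measurableSet_Ioo]
      refine Filter.Eventually.of_forall (fun s hs => ?_)
      have h2 : (0:ℝ) ≤ 1 / (T - s) := by
        have := hs.2
        have : (0:ℝ) < T - s := by linarith
        positivity
      simp only [Pi.zero_apply]
      have h1 : (0:ℝ) ≤ |t - s| ^ (-α) := Real.rpow_nonneg (abs_nonneg _) _
      have h3 : (0:ℝ) ≤ (1 / (T - s)) ^ β := Real.rpow_nonneg h2 _
      exact mul_nonneg (mul_nonneg h1 h3) (Real.exp_pos _).le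
    · exact hgint
    · exact (ae_restrict_iff' measurableSet_Ioo).2
        (Filter.Eventually.of_forall hpt)
  -- compute integral of g
  have hvol : (volume (Ioo t T)).toReal = δ := by
    rw [Real.volume_Ioo, ENNReal.toReal_ofReal hδ.le]
  have hgcalc : (∫ s in Ioo t T, g s)
      = Real.exp (-ℓ / δ) * ((δ / 2) ^ (-β) * (∫ s in Ioo t T, F (s - t)) + C₂ * δ) := by
    rw [hg]
    rw [integral_const_mul]
    congr 1
    rw [integral_add (hFtI.const_mul _) hIooI, integral_const_mul, setIntegral_const,
      measureReal_def, hvol, smul_eq_mul]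
    ring
  -- bound the F-integral
  have hJ : (∫ s in Ioo t T, F (s - t)) ≤ (1 / c) ^ (1 - α) * Real.Gamma (1 - α) := by
    have h1 : (∫ s in Ioo t T, F (s - t)) ≤ ∫ s in Ioi t, F (s - t) := by
      apply setIntegral_mono_set hFt
      · rw [Filter.EventuallyLE, ae_restrict_iff' measurableSet_Ioi]
        refine Filter.Eventually.of_forall (fun s hs => ?_)
        have hs0 : (0:ℝ) < s - t := sub_pos.2 hs
        simp only [Pi.zero_apply, hF]
        positivity
      · exact Filter.Eventually.of_forall (fun s hs => Ioo_subset_Ioi_self hs)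
    have h2 : (∫ s in Ioi t, F (s - t)) = ∫ u in Ioi 0, F u := by
      have := hmp.setIntegral_preimage_emb hemb (fun s => F (s - t)) (Ioi t)
      rw [hpre] at this
      rw [← this]
      apply setIntegral_congr_fun measurableSet_Ioi
      intro u _
      simp
    have h3 : (∫ u in Ioi 0, F u) = (1 / c) ^ (1 - α) * Real.Gamma (1 - α) := by
      have := Real.integral_rpow_mul_exp_neg_mul_Ioi h1α hc
      rw [← this]
      apply setIntegral_congr_fun measurableSet_Ioi
      intro u _
      rw [hF]
      congr 2
      ring
    rw [h2, h3] at h1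
    exact h1
  -- arithmetic identities
  have term1 : (δ / 2) ^ (-β) * ((1 / c) ^ (1 - α) * Real.Gamma (1 - α)) = A * ℓ ^ (α - 1) := by
    have h1c : (1:ℝ) / c = δ ^ 2 / ℓ := by
      rw [hcdef]; field_simp
    have hδ2 : (δ ^ 2 : ℝ) ^ (1 - α) = δ ^ β := by
      rw [← Real.rpow_natCast δ 2, ← Real.rpow_mul hδ.le, hβdef]
      norm_num
    have e1 : ((1:ℝ) / c) ^ (1 - α) = δ ^ β * ℓ ^ (α - 1) := by
      rw [h1c, Real.div_rpow (by positivity) hℓpos.le, hδ2, div_eq_mul_inv,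
        ← Real.rpow_neg hℓpos.le]
      congr 1
      ring
    have e2 : ((δ:ℝ) / 2) ^ (-β) = δ ^ (-β) * 2 ^ β := by
      rw [Real.div_rpow hδ.le (by norm_num), div_eq_mul_inv, ← Real.rpow_neg (by norm_num)]
      congr 1
      rw [neg_neg]
    rw [e1, e2, hA]
    have e3 : δ ^ (-β) * δ ^ β = 1 := by
      rw [← Real.rpow_add hδ]; simp
    calc δ ^ (-β) * 2 ^ β * (δ ^ β * ℓ ^ (α - 1) * Real.Gamma (1 - α))
        = (δ ^ (-β) * δ ^ β) * (2 ^ β * Real.Gamma (1 - α) * ℓ ^ (α - 1)) := by ring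
      _ = 2 ^ β * Real.Gamma (1 - α) * ℓ ^ (α - 1) := by rw [e3, one_mul]
  have term2 : C₂ * δ ≤ Bc * ℓ ^ (-β) := by
    have e4 : (2 * β / (ℓ * Real.exp 1)) ^ β = (2 * β / Real.exp 1) ^ β * ℓ ^ (-β) := by
      have : 2 * β / (ℓ * Real.exp 1) = (2 * β / Real.exp 1) * ℓ⁻¹ := by
        field_simp
      rw [this, Real.mul_rpow (by positivity) (by positivity),
        ← Real.rpow_neg_one ℓ, ← Real.rpow_mul hℓpos.le]
      norm_num
    have e5 : (δ / 2) ^ (-α) * δ = 2 * (δ / 2) ^ (1 - α) := by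
      have : δ = 2 * (δ / 2) := by ring
      nth_rewrite 1 [this]
      rw [show (1:ℝ) - α = -α + 1 by ring, Real.rpow_add (by positivity), Real.rpow_one]
      ring
    have e6 : (δ / 2) ^ (1 - α) ≤ (T / 2) ^ (1 - α) :=
      Real.rpow_le_rpow (by positivity) (by linarith) h1α.le
    calc C₂ * δ = (δ / 2) ^ (-α) * δ * (2 * β / (ℓ * Real.exp 1)) ^ β := by
          rw [hC2]; ring
      _ = 2 * (δ / 2) ^ (1 - α) * ((2 * β / Real.exp 1) ^ β * ℓ ^ (-β)) := by
          rw [e4, e5]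
      _ ≤ 2 * (T / 2) ^ (1 - α) * ((2 * β / Real.exp 1) ^ β * ℓ ^ (-β)) := by
          apply mul_le_mul_of_nonneg_right _ (by positivity)
          linarith
      _ = Bc * ℓ ^ (-β) := by rw [hB]; ring
  -- final chain
  calc (∫ s in Ioo t T,
        |t - s| ^ (-α) * (1 / (T - s)) ^ β * Real.exp (-ℓ / (T - s)))
      ≤ ∫ s in Ioo t T, g s := hmono
    _ = Real.exp (-ℓ / δ) * ((δ / 2) ^ (-β) * (∫ s in Ioo t T, F (s - t)) + C₂ * δ) := hgcalc
    _ ≤ Real.exp (-ℓ / δ) * (A * ℓ ^ (α - 1) + Bc * ℓ ^ (-β)) := by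
        apply mul_le_mul_of_nonneg_left _ (Real.exp_pos _).le
        apply add_le_add _ term2
        calc (δ / 2) ^ (-β) * (∫ s in Ioo t T, F (s - t))
            ≤ (δ / 2) ^ (-β) * ((1 / c) ^ (1 - α) * Real.Gamma (1 - α)) :=
              mul_le_mul_of_nonneg_left hJ (by positivity)
          _ = A * ℓ ^ (α - 1) := term1
    _ ≤ Real.exp (-ℓ / δ) * c₁ := mul_le_mul_of_nonneg_left hφ (Real.exp_pos _).le
    _ = c₁ * Real.exp (-ℓ / δ) := mul_comm _ _
end

section
/- For α∈(0,1) and ℓ>0, the inequality ∫_{1/2}^{1} (1−w)^{−α} w^{−2(1−α)} e^{−ℓ(1−w)/(tw)} dw ≤ C t^{1−α} ∫₀^∞ r^{−α} e^{−ℓ r} dr holds for all t∈(0,1], where C depends only on α; moreover ∫₀^∞ r^{−α} e^{−ℓr} dr = Γ(1−α) ℓ^{α−1} → 0 as ℓ→∞. -/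
open MeasureTheory Real Set

lemma key_int (α : ℝ) (hα : α ∈ Set.Ioo (0:ℝ) 1) {b : ℝ} (hb : 0 < b) :
    ∫ r in Set.Ioi (0:ℝ), r ^ (-α) * Real.exp (-(b * r))
      = Real.Gamma (1 - α) * b ^ (α - 1) := by
  have h1 : (0:ℝ) < 1 - α := by linarith [hα.2]
  have h := Real.integral_rpow_mul_exp_neg_mul_Ioi h1 hb
  rw [show (1 - α) - 1 = -α by ring] at h
  rw [h, one_div, Real.inv_rpow hb.le, ← Real.rpow_neg hb.le,
    show -(1 - α) = α - 1 by ring, mul_comm]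

lemma key_integrable (α : ℝ) (hα : α ∈ Set.Ioo (0:ℝ) 1) {b : ℝ} (hb : 0 < b) :
    IntegrableOn (fun r : ℝ => r ^ (-α) * Real.exp (-(b * r))) (Set.Ioi 0) := by
  have h := integrableOn_rpow_mul_exp_neg_mul_rpow (p := 1) (s := -α) (b := b)
    (by linarith [hα.2]) zero_lt_one hb
  simpa [Real.rpow_one, neg_mul] using h

theorem integral_estimate_half_one (α : ℝ) (hα : α ∈ Set.Ioo (0:ℝ) 1) :
    (∃ C > 0, ∀ ℓ > (0:ℝ), ∀ t ∈ Set.Ioc (0:ℝ) 1,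
      (∫ w in Set.Ioo (1/2:ℝ) 1,
          (1 - w) ^ (-α) * w ^ (-(2 * (1 - α))) * Real.exp (-(ℓ * (1 - w)) / (t * w)))
        ≤ C * t ^ (1 - α) * ∫ r in Set.Ioi (0:ℝ), r ^ (-α) * Real.exp (-(ℓ * r))) ∧
    (∀ ℓ > (0:ℝ),
      (∫ r in Set.Ioi (0:ℝ), r ^ (-α) * Real.exp (-(ℓ * r)))
        = Real.Gamma (1 - α) * ℓ ^ (α - 1)) ∧
    Filter.Tendsto (fun ℓ : ℝ => ∫ r in Set.Ioi (0:ℝ), r ^ (-α) * Real.exp (-(ℓ * r)))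
      Filter.atTop (nhds 0) := by
  obtain ⟨hα0, hα1⟩ := hα
  have hΓ : 0 < Real.Gamma (1 - α) := Real.Gamma_pos_of_pos (by linarith)
  refine ⟨⟨4, by norm_num, ?_⟩, fun ℓ hℓ => key_int α ⟨hα0, hα1⟩ hℓ, ?_⟩
  · intro ℓ hℓ t ht
    obtain ⟨ht0, ht1⟩ := ht
    set b : ℝ := ℓ / t with hbdef
    have hb : 0 < b := div_pos hℓ ht0
    set f : ℝ → ℝ := fun w =>
      (1 - w) ^ (-α) * w ^ (-(2 * (1 - α))) * Real.exp (-(ℓ * (1 - w)) / (t * w)) with hf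
    set g : ℝ → ℝ := fun w => (1 - w) ^ (-α) * Real.exp (-(b * (1 - w))) with hg
    -- pointwise bound
    have hbound : ∀ w ∈ Set.Ioo (1/2:ℝ) 1, f w ≤ 4 * g w := by
      intro w hw
      obtain ⟨hw1, hw2⟩ := hw
      have hw0 : 0 < w := by linarith
      have h1w : 0 ≤ 1 - w := by linarith
      have hA : (0:ℝ) ≤ (1 - w) ^ (-α) := Real.rpow_nonneg h1w _
      have hB : w ^ (-(2 * (1 - α))) ≤ 4 := by
        have e1 : w ^ (-(2 * (1 - α))) ≤ (1/2:ℝ) ^ (-(2 * (1 - α))) :=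
          Real.rpow_le_rpow_of_nonpos (by norm_num) hw1.le (by nlinarith)
        have e2 : (1/2:ℝ) ^ (-(2 * (1 - α))) = 2 ^ (2 * (1 - α)) := by
          rw [show (1/2:ℝ) = (2:ℝ) ^ (-1:ℝ) by rw [Real.rpow_neg_one]; norm_num,
            ← Real.rpow_mul (by norm_num)]
          ring_nf
        have e3 : (2:ℝ) ^ (2 * (1 - α)) ≤ (2:ℝ) ^ (2:ℝ) :=
          Real.rpow_le_rpow_of_exponent_le one_le_two (by nlinarith)
        have e4 : (2:ℝ) ^ (2:ℝ) = 4 := by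
          rw [show (2:ℝ) = ((2:ℕ):ℝ) from by norm_num, Real.rpow_natCast]
          norm_num
        calc w ^ (-(2 * (1 - α))) ≤ (1/2:ℝ) ^ (-(2 * (1 - α))) := e1
          _ = 2 ^ (2 * (1 - α)) := e2
          _ ≤ (2:ℝ) ^ (2:ℝ) := e3
          _ = 4 := e4
      have hC : Real.exp (-(ℓ * (1 - w)) / (t * w)) ≤ Real.exp (-(b * (1 - w))) := by
        rw [Real.exp_le_exp, neg_div, hbdef, div_mul_eq_mul_div, neg_le_neg_iff,
          div_le_div_iff₀ (by positivity) (by positivity)]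
        nlinarith [mul_nonneg (mul_nonneg (mul_nonneg hℓ.le h1w) ht0.le) h1w]
      calc f w = (1 - w) ^ (-α) * w ^ (-(2 * (1 - α))) * Real.exp (-(ℓ * (1 - w)) / (t * w)) := rfl
        _ ≤ (1 - w) ^ (-α) * 4 * Real.exp (-(b * (1 - w))) := by
            apply mul_le_mul (mul_le_mul_of_nonneg_left hB hA) hC (Real.exp_nonneg _) (by positivity)
        _ = 4 * g w := by rw [hg]; ring
    -- integrability of g on Ioo (1/2) 1
    have hgint : IntegrableOn g (Set.Ioo (1/2:ℝ) 1) := by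
      have h0 : IntegrableOn (fun s : ℝ => s ^ (-α) * Real.exp (-(b * s))) (Set.Ioc (0:ℝ) (1/2)) :=
        (key_integrable α ⟨hα0, hα1⟩ hb).mono_set Set.Ioc_subset_Ioi_self
      have h1 : IntervalIntegrable (fun s : ℝ => s ^ (-α) * Real.exp (-(b * s)))
          volume 0 (1/2) := by
        rw [intervalIntegrable_iff_integrableOn_Ioc_of_le (by norm_num)]
        exact h0
      have h2 := (h1.comp_sub_left 1).symm
      simp only [show (1:ℝ) - 0 = 1 by norm_num, show (1:ℝ) - 1/2 = 1/2 by norm_num] at h2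
      rw [intervalIntegrable_iff_integrableOn_Ioc_of_le (by norm_num : (1/2:ℝ) ≤ 1)] at h2
      exact h2.mono_set Set.Ioo_subset_Ioc_self
    -- integrability of f on Ioo (1/2) 1
    have hmeas : AEStronglyMeasurable f (volume.restrict (Set.Ioo (1/2:ℝ) 1)) := by
      apply Measurable.aestronglyMeasurable
      fun_prop
    have hfint : IntegrableOn f (Set.Ioo (1/2:ℝ) 1) := by
      refine Integrable.mono' (hgint.const_mul 4) hmeas ?_
      filter_upwards [ae_restrict_mem measurableSet_Ioo] with w hw
      rw [Real.norm_eq_abs, abs_of_nonneg]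
      · exact hbound w hw
      · exact mul_nonneg (mul_nonneg (Real.rpow_nonneg (by linarith [hw.2]) _)
          (Real.rpow_nonneg (by linarith [hw.1]) _)) (Real.exp_nonneg _)
    have step1 : ∫ w in Set.Ioo (1/2:ℝ) 1, f w ≤ ∫ w in Set.Ioo (1/2:ℝ) 1, 4 * g w :=
      setIntegral_mono_on hfint (hgint.const_mul 4) measurableSet_Ioo hbound
    have step2 : ∫ w in Set.Ioo (1/2:ℝ) 1, g w
        = ∫ s in Set.Ioo (0:ℝ) (1/2), s ^ (-α) * Real.exp (-(b * s)) := by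
      rw [← integral_Ioc_eq_integral_Ioo, ← integral_Ioc_eq_integral_Ioo,
        ← intervalIntegral.integral_of_le (by norm_num : (1/2:ℝ) ≤ 1),
        ← intervalIntegral.integral_of_le (by norm_num : (0:ℝ) ≤ 1/2)]
      have h := intervalIntegral.integral_comp_sub_left (a := (1/2:ℝ)) (b := 1)
        (fun s => s ^ (-α) * Real.exp (-(b * s))) 1
      rw [show (1:ℝ) - 1 = 0 by norm_num, show (1:ℝ) - 1/2 = 1/2 by norm_num] at h
      simpa [hg] using h
    have step3 : ∫ s in Set.Ioo (0:ℝ) (1/2), s ^ (-α) * Real.exp (-(b * s))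
        ≤ ∫ s in Set.Ioi (0:ℝ), s ^ (-α) * Real.exp (-(b * s)) := by
      apply setIntegral_mono_set (key_integrable α ⟨hα0, hα1⟩ hb)
      · filter_upwards [ae_restrict_mem measurableSet_Ioi] with s hs
        exact mul_nonneg (Real.rpow_nonneg hs.le _) (Real.exp_nonneg _)
      · exact (Set.Ioo_subset_Ioi_self).eventuallyLE
    have hpow : b ^ (α - 1) = t ^ (1 - α) * ℓ ^ (α - 1) := by
      rw [hbdef, Real.div_rpow hℓ.le ht0.le, div_eq_mul_inv, ← Real.rpow_neg ht0.le,
        show -(α - 1) = 1 - α by ring, mul_comm]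
    calc ∫ w in Set.Ioo (1/2:ℝ) 1, f w
        ≤ ∫ w in Set.Ioo (1/2:ℝ) 1, 4 * g w := step1
      _ = 4 * ∫ w in Set.Ioo (1/2:ℝ) 1, g w := by rw [MeasureTheory.integral_const_mul]
      _ = 4 * ∫ s in Set.Ioo (0:ℝ) (1/2), s ^ (-α) * Real.exp (-(b * s)) := by rw [step2]
      _ ≤ 4 * ∫ s in Set.Ioi (0:ℝ), s ^ (-α) * Real.exp (-(b * s)) := by linarith [step3]
      _ = 4 * (Real.Gamma (1 - α) * b ^ (α - 1)) := by rw [key_int α ⟨hα0, hα1⟩ hb]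
      _ = 4 * t ^ (1 - α) * (Real.Gamma (1 - α) * ℓ ^ (α - 1)) := by rw [hpow]; ring
      _ = 4 * t ^ (1 - α) * ∫ r in Set.Ioi (0:ℝ), r ^ (-α) * Real.exp (-(ℓ * r)) := by
          rw [key_int α ⟨hα0, hα1⟩ hℓ]
  · have htend : Filter.Tendsto (fun ℓ : ℝ => Real.Gamma (1 - α) * ℓ ^ (α - 1))
        Filter.atTop (nhds 0) := by
      have h := (tendsto_rpow_neg_atTop (by linarith : (0:ℝ) < 1 - α)).const_mul
        (Real.Gamma (1 - α))
      simp only [mul_zero] at h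
      exact h.congr (fun x => by rw [show -(1 - α) = α - 1 by ring])
    apply Filter.Tendsto.congr' _ htend
    filter_upwards [Filter.eventually_gt_atTop 0] with ℓ hℓ
    exact (key_int α ⟨hα0, hα1⟩ hℓ).symm
end

section
/- With Q_T as above and assuming the exponential decay |Q_{k(0)}(x)| ≤ C e^{−θ|x|} for some C,θ>0, for every R>0 and t<T with T−t ≤ 1, ∫_{|x|≥R} |x|^{−b} |Q_T(x,t)|^{σ_b} dx ≲ R^{−2} e^{−θ'R/(T−t)} for some θ'>0 depending only on θ, σ_b, N, b. -/
open MeasureTheory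

section Aux
open Set Real Measure

theorem QTaux_integrable {N : ℕ} (hN : 1 ≤ N) {b c : ℝ} (hb0 : 0 < b) (hbN : b < N) (hc : 0 < c) :
    Integrable (fun x : EuclideanSpace ℝ (Fin N) => ‖x‖ ^ (-b) * Real.exp (-c * ‖x‖)) := by
  set E := EuclideanSpace ℝ (Fin N)
  have hN0 : 0 < N := hN
  have hne : Nonempty (Fin N) := ⟨⟨0, hN0⟩⟩
  have : Nontrivial E := inferInstanceAs (Nontrivial (PiLp 2 fun _ : Fin N => ℝ))
  set f : ℝ → ℝ := fun r => r ^ (-b) * Real.exp (-c * r) with hf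
  have hfm : Measurable f := by fun_prop
  have hdim : Module.finrank ℝ E = N := by simp [E, finrank_euclideanSpace]
  have h1d : IntegrableOn (fun r : ℝ => f r * (ENNReal.ofReal (r ^ (N - 1))).toReal) (Ioi 0) := by
    have base := integrableOn_rpow_mul_exp_neg_mul_rpow (p := 1) (s := (N:ℝ) - 1 - b) (b := c)
      (by push_cast; linarith) one_pos hc
    refine base.congr_fun ?_ measurableSet_Ioi
    intro r hr
    have hr0 : (0:ℝ) < r := hr
    simp only [hf]
    rw [Real.rpow_one, ENNReal.toReal_ofReal (by positivity)]
    have : ((N:ℝ) - 1 - b) = (-b) + ((N - 1 : ℕ) : ℝ) := by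
      push_cast [Nat.cast_sub hN]; ring
    rw [this, Real.rpow_add hr0, Real.rpow_natCast]
    ring
  have hkey : Integrable (fun y : Ioi (0:ℝ) => f y.1) (volumeIoiPow (Module.finrank ℝ E - 1)) := by
    rw [hdim, volumeIoiPow, integrable_withDensity_iff (by fun_prop)
      (Filter.Eventually.of_forall fun _ => ENNReal.ofReal_lt_top)]
    have := ((MeasurableEmbedding.subtype_coe (measurableSet_Ioi (a := (0:ℝ)))).integrable_map_iff
      (μ := (volume : Measure ℝ).comap Subtype.val)
      (g := fun r : ℝ => f r * (ENNReal.ofReal (r ^ (N - 1))).toReal))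
    rw [map_comap_subtype_coe measurableSet_Ioi] at this
    exact this.mp h1d
  have step1 := ((MeasurableEmbedding.subtype_coe
      (measurableSet_singleton (0:E)).compl).integrable_map_iff
      (μ := (volume : Measure E).comap Subtype.val) (g := fun x : E => f ‖x‖))
  rw [map_comap_subtype_coe (measurableSet_singleton (0:E)).compl,
    restrict_compl_singleton] at step1
  have step2 := (measurePreserving_homeomorphUnitSphereProd
      (volume : Measure E)).integrable_comp_emb
      (Homeomorph.measurableEmbedding _) (g := f ∘ Subtype.val ∘ Prod.snd)
  have hcomp : ((fun x : E => f ‖x‖) ∘ (Subtype.val : ({(0:E)}ᶜ : Set E) → E)) =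
      ((f ∘ Subtype.val ∘ Prod.snd) ∘ ⇑(homeomorphUnitSphereProd E)) := by funext x; simp
  rw [step1, hcomp, step2]
  have hmeas : AEStronglyMeasurable (f ∘ Subtype.val ∘ Prod.snd)
      ((volume : Measure E).toSphere.prod (volumeIoiPow (Module.finrank ℝ E - 1))) :=
    (hfm.comp (measurable_subtype_coe.comp measurable_snd)).aestronglyMeasurable
  rw [integrable_prod_iff hmeas]
  refine ⟨Filter.Eventually.of_forall fun _ => hkey, ?_⟩
  simpa using integrable_const (μ := (volume : Measure E).toSphere)
    (∫ y : Ioi (0:ℝ), ‖f y.1‖ ∂(volumeIoiPow (Module.finrank ℝ E - 1)))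

theorem QTaux_exp_le {s : ℝ} (hs : 0 < s) : Real.exp (-s) ≤ 4 / s ^ 2 := by
  have h1 : (1 + s/2) ^ 2 ≤ Real.exp s := by
    have := Real.add_one_le_exp (s/2)
    calc (1 + s/2)^2 ≤ (Real.exp (s/2))^2 := by nlinarith [Real.exp_pos (s/2)]
    _ = Real.exp s := by rw [← Real.exp_nat_mul]; ring_nf
  have h2 : s ^ 2 ≤ 4 * Real.exp s := by nlinarith
  rw [Real.exp_neg, le_div_iff₀ (by positivity), inv_mul_eq_div, div_le_iff₀ (Real.exp_pos s)]
  linarith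

end Aux

/-- The pseudo-conformal blow-up profile `Q_T(x,t)`. -/
noncomputable def QT {N : ℕ} (T : ℝ) (Q : EuclideanSpace ℝ (Fin N) → ℝ) (t : ℝ)
    (x : EuclideanSpace ℝ (Fin N)) : ℂ :=
  (((T - t) ^ (-(N : ℝ) / 2) : ℝ) : ℂ) *
    Complex.exp (Complex.I * (((1 / (T - t) - ‖x‖ ^ 2 / (4 * (T - t))) : ℝ) : ℂ)) *
    ((Q ((T - t)⁻¹ • x) : ℝ) : ℂ)

theorem QTaux_norm {N : ℕ} (T : ℝ) (Q : EuclideanSpace ℝ (Fin N) → ℝ) (t : ℝ) (ht : t < T)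
    (x : EuclideanSpace ℝ (Fin N)) :
    ‖QT T Q t x‖ = (T - t) ^ (-(N : ℝ) / 2) * |Q ((T - t)⁻¹ • x)| := by
  have h : (0:ℝ) < T - t := by linarith
  rw [QT, norm_mul, norm_mul, Complex.norm_real, Complex.norm_real,
    Complex.norm_exp]
  rw [Real.norm_eq_abs, Real.norm_eq_abs, abs_of_nonneg (Real.rpow_nonneg h.le _)]
  have h0 : ∀ r : ℝ, (Complex.I * (r : ℂ)).re = 0 := fun r => by simp
  rw [h0, Real.exp_zero, mul_one]

theorem QT_exterior_decay (N : ℕ) (hN : 1 ≤ N) (b σb : ℝ)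
    (hb : 0 < b ∧ b < min 2 N) (hσ : σb = (4 - 2 * b) / N + 2)
    (Q : EuclideanSpace ℝ (Fin N) → ℝ) (T : ℝ) (hT : 0 < T)
    (Cd θ : ℝ) (hCd : 0 < Cd) (hθ : 0 < θ)
    (hdecay : ∀ x : EuclideanSpace ℝ (Fin N), |Q x| ≤ Cd * Real.exp (-θ * ‖x‖)) :
    ∃ C > 0, ∃ θ' > 0, ∀ R > (0:ℝ), ∀ t < T, T - t ≤ 1 →
      (∫ x in {x : EuclideanSpace ℝ (Fin N) | R ≤ ‖x‖}, ‖x‖ ^ (-b) * ‖QT T Q t x‖ ^ σb)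
        ≤ C * R ^ (-(2:ℝ)) * Real.exp (-θ' * R / (T - t)) := by
  obtain ⟨hb0, hb2N⟩ := hb
  have hb2 : b < 2 := lt_of_lt_of_le hb2N (by exact_mod_cast min_le_left 2 N)
  have hbN : b < N := lt_of_lt_of_le hb2N (by exact_mod_cast min_le_right 2 N)
  have hNpos : (0:ℝ) < N := by exact_mod_cast hN
  have hσpos : 0 < σb := by
    rw [hσ]
    have h4 : (0:ℝ) < 4 - 2 * b := by linarith
    positivity
  set c := θ * σb with hc
  have hcpos : 0 < c := mul_pos hθ hσpos
  have hgint : Integrable (fun y : EuclideanSpace ℝ (Fin N) =>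
      ‖y‖ ^ (-b) * Real.exp (-(c/2) * ‖y‖)) := QTaux_integrable hN hb0 hbN (by positivity)
  set I₀ := ∫ y : EuclideanSpace ℝ (Fin N), ‖y‖ ^ (-b) * Real.exp (-(c/2) * ‖y‖) with hI
  have hI0 : 0 ≤ I₀ := integral_nonneg (fun y => by positivity)
  refine ⟨64 * Cd ^ σb * (I₀ + 1) / c ^ 2, by positivity, c/4, by positivity, ?_⟩
  intro R hR t ht hεle
  have hε : (0:ℝ) < T - t := by linarith
  have hdimE : Module.finrank ℝ (EuclideanSpace ℝ (Fin N)) = N := by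
    simp [finrank_euclideanSpace]
  set g : EuclideanSpace ℝ (Fin N) → ℝ :=
    fun y => ‖y‖ ^ (-b) * Real.exp (-(c/2) * ‖y‖) with hg
  set hfun : EuclideanSpace ℝ (Fin N) → ℝ :=
    fun x => ‖x‖ ^ (-b) * Real.exp (-(c/(2*(T-t))) * ‖x‖) with hhfun
  have hsmulnorm : ∀ x : EuclideanSpace ℝ (Fin N), ‖(T-t)⁻¹ • x‖ = (T-t)⁻¹ * ‖x‖ := fun x => by
    rw [norm_smul, Real.norm_eq_abs, abs_of_pos (inv_pos.mpr hε)]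
  have hident : ∀ x, hfun x = (T-t) ^ (-b) * g ((T-t)⁻¹ • x) := by
    intro x
    simp only [hg, hhfun]
    rw [hsmulnorm, Real.mul_rpow (by positivity) (norm_nonneg x), Real.inv_rpow hε.le,
      ← Real.rpow_neg hε.le]
    have e1 : -(c/2) * ((T-t)⁻¹ * ‖x‖) = -(c/(2*(T-t))) * ‖x‖ := by field_simp
    have e2 : (T-t) ^ (-b) * ((T-t) ^ (-(-b)) : ℝ) = 1 := by
      rw [← Real.rpow_add hε]; simp
    rw [e1]
    calc ‖x‖ ^ (-b) * Real.exp (-(c/(2*(T-t))) * ‖x‖)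
        = ((T-t) ^ (-b) * ((T-t) ^ (-(-b)) : ℝ)) * (‖x‖ ^ (-b) * Real.exp (-(c/(2*(T-t))) * ‖x‖)) := by
          rw [e2, one_mul]
      _ = (T-t) ^ (-b) * ((T-t) ^ (-(-b)) * ‖x‖ ^ (-b) * Real.exp (-(c/(2*(T-t))) * ‖x‖)) := by ring
      _ = _ := by rw [neg_neg]
  have hfunint : Integrable hfun := by
    have h1 : Integrable (fun x => g ((T-t)⁻¹ • x)) :=
      hgint.comp_smul (inv_ne_zero hε.ne')
    have h2 : hfun = fun x => (T-t) ^ (-b) * g ((T-t)⁻¹ • x) := funext hident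
    rw [h2]
    exact h1.const_mul _
  have hscale : (∫ x, hfun x) = (T-t) ^ ((N:ℝ) - b) * I₀ := by
    simp_rw [hident]
    rw [integral_const_mul, MeasureTheory.Measure.integral_comp_inv_smul_of_nonneg volume g hε.le,
      hdimE, smul_eq_mul, ← Real.rpow_natCast (T-t) N, ← mul_assoc, ← Real.rpow_add hε]
    rw [show (-b + (N:ℝ)) = (N:ℝ) - b by ring, ← hI]
  -- pointwise bound on the exterior set
  set K₁ := Cd ^ σb * (T-t) ^ (-(N:ℝ)*σb/2) * Real.exp (-(c/(2*(T-t))) * R) with hK₁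
  have hpt : ∀ x ∈ {x : EuclideanSpace ℝ (Fin N) | R ≤ ‖x‖},
      ‖x‖ ^ (-b) * ‖QT T Q t x‖ ^ σb ≤ K₁ * hfun x := by
    intro x hx
    have hxR : R ≤ ‖x‖ := hx
    have hQTb : ‖QT T Q t x‖ ^ σb ≤ Cd ^ σb * (T-t) ^ (-(N:ℝ)*σb/2) *
        (Real.exp (-(c/(2*(T-t))) * R) * Real.exp (-(c/(2*(T-t))) * ‖x‖)) := by
      calc ‖QT T Q t x‖ ^ σb
          = ((T-t) ^ (-(N:ℝ)/2) * |Q ((T-t)⁻¹ • x)|) ^ σb := by rw [QTaux_norm T Q t ht]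
        _ ≤ ((T-t) ^ (-(N:ℝ)/2) * (Cd * Real.exp (-θ * ((T-t)⁻¹ * ‖x‖)))) ^ σb := by
            apply Real.rpow_le_rpow (by positivity) ?_ hσpos.le
            have hd := hdecay ((T-t)⁻¹ • x)
            rw [hsmulnorm] at hd
            exact mul_le_mul_of_nonneg_left hd (Real.rpow_nonneg hε.le _)
        _ = (T-t) ^ (-(N:ℝ)/2*σb) * (Cd ^ σb * Real.exp (-θ * ((T-t)⁻¹ * ‖x‖) * σb)) := by
            rw [Real.mul_rpow (Real.rpow_nonneg hε.le _) (by positivity),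
              Real.mul_rpow hCd.le (Real.exp_nonneg _), ← Real.rpow_mul hε.le,
              ← Real.exp_mul]
        _ = Cd ^ σb * (T-t) ^ (-(N:ℝ)*σb/2) *
            (Real.exp (-(c/(2*(T-t))) * ‖x‖) * Real.exp (-(c/(2*(T-t))) * ‖x‖)) := by
            have e1 : -(N:ℝ)/2*σb = -(N:ℝ)*σb/2 := by ring
            have e2 : -θ * ((T-t)⁻¹ * ‖x‖) * σb =
                -(c/(2*(T-t))) * ‖x‖ + -(c/(2*(T-t))) * ‖x‖ := by
              rw [hc]; field_simp; ring
            rw [e1, e2, Real.exp_add]; ring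
        _ ≤ _ := by
            have : Real.exp (-(c/(2*(T-t))) * ‖x‖) ≤ Real.exp (-(c/(2*(T-t))) * R) := by
              apply Real.exp_le_exp.mpr
              have hpos : 0 < c/(2*(T-t)) := by positivity
              nlinarith
            apply mul_le_mul_of_nonneg_left _ (by positivity)
            exact mul_le_mul_of_nonneg_right this (Real.exp_nonneg _)
    calc ‖x‖ ^ (-b) * ‖QT T Q t x‖ ^ σb
        ≤ ‖x‖ ^ (-b) * (Cd ^ σb * (T-t) ^ (-(N:ℝ)*σb/2) *
          (Real.exp (-(c/(2*(T-t))) * R) * Real.exp (-(c/(2*(T-t))) * ‖x‖))) :=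
          mul_le_mul_of_nonneg_left hQTb (Real.rpow_nonneg (norm_nonneg _) _)
      _ = K₁ * hfun x := by simp only [hK₁, hhfun]; ring
  have hSmeas : MeasurableSet {x : EuclideanSpace ℝ (Fin N) | R ≤ ‖x‖} :=
    (isClosed_le continuous_const continuous_norm).measurableSet
  have hstep : (∫ x in {x : EuclideanSpace ℝ (Fin N) | R ≤ ‖x‖},
      ‖x‖ ^ (-b) * ‖QT T Q t x‖ ^ σb) ≤ K₁ * ((T-t) ^ ((N:ℝ) - b) * I₀) := by
    calc (∫ x in {x : EuclideanSpace ℝ (Fin N) | R ≤ ‖x‖}, ‖x‖ ^ (-b) * ‖QT T Q t x‖ ^ σb)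
        ≤ ∫ x in {x : EuclideanSpace ℝ (Fin N) | R ≤ ‖x‖}, K₁ * hfun x := by
          apply integral_mono_of_nonneg
          · exact Filter.Eventually.of_forall fun x => by positivity
          · exact ((hfunint.const_mul K₁).integrableOn)
          · exact (ae_restrict_iff' hSmeas).mpr (Filter.Eventually.of_forall hpt)
      _ = K₁ * ∫ x in {x : EuclideanSpace ℝ (Fin N) | R ≤ ‖x‖}, hfun x := integral_const_mul _ _
      _ ≤ K₁ * ∫ x, hfun x := by
          apply mul_le_mul_of_nonneg_left _ (by positivity)
          apply setIntegral_le_integral hfunint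
          exact Filter.Eventually.of_forall fun x => by positivity
      _ = K₁ * ((T-t) ^ ((N:ℝ) - b) * I₀) := by rw [hscale]
  refine hstep.trans ?_
  -- final numeric computation
  have hexpid : -(N:ℝ)*σb/2 + ((N:ℝ) - b) = -2 := by
    have h5 : (N:ℝ) * σb = 4 - 2*b + 2*(N:ℝ) := by
      rw [hσ]; field_simp
    linarith
  have hcomb : (T-t) ^ (-(N:ℝ)*σb/2) * (T-t) ^ ((N:ℝ) - b) = ((T-t) ^ 2)⁻¹ := by
    rw [← Real.rpow_add hε, hexpid]
    rw [show (-2:ℝ) = -((2:ℕ):ℝ) by norm_num, Real.rpow_neg hε.le, Real.rpow_natCast]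
  have hsplit : Real.exp (-(c/(2*(T-t))) * R) =
      Real.exp (-(c/4) * R / (T-t)) * Real.exp (-(c*R/(4*(T-t)))) := by
    rw [← Real.exp_add]
    congr 1
    field_simp
    ring
  have hs : 0 < c*R/(4*(T-t)) := by positivity
  have hexp2 : Real.exp (-(c*R/(4*(T-t)))) ≤ 64 * (T-t)^2 / (c^2 * R^2) := by
    calc Real.exp (-(c*R/(4*(T-t)))) ≤ 4 / (c*R/(4*(T-t)))^2 := QTaux_exp_le hs
      _ = 64 * (T-t)^2 / (c^2 * R^2) := by field_simp; ring
  have hR2 : R ^ (-(2:ℝ)) = (R^2)⁻¹ := by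
    rw [show (-2:ℝ) = -((2:ℕ):ℝ) by norm_num, Real.rpow_neg hR.le, Real.rpow_natCast]
  calc K₁ * ((T-t) ^ ((N:ℝ) - b) * I₀)
      = Cd ^ σb * I₀ * ((T-t) ^ (-(N:ℝ)*σb/2) * (T-t) ^ ((N:ℝ) - b)) *
        Real.exp (-(c/(2*(T-t))) * R) := by rw [hK₁]; ring
    _ = Cd ^ σb * I₀ * ((T-t)^2)⁻¹ *
        (Real.exp (-(c/4) * R / (T-t)) * Real.exp (-(c*R/(4*(T-t))))) := by
        rw [hcomb, hsplit]
    _ ≤ Cd ^ σb * I₀ * ((T-t)^2)⁻¹ *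
        (Real.exp (-(c/4) * R / (T-t)) * (64 * (T-t)^2 / (c^2 * R^2))) := by
        apply mul_le_mul_of_nonneg_left _ (by positivity)
        exact mul_le_mul_of_nonneg_left hexp2 (Real.exp_nonneg _)
    _ = 64 * Cd ^ σb * I₀ / c^2 * (R^2)⁻¹ * Real.exp (-(c/4) * R / (T-t)) := by
        field_simp
    _ ≤ 64 * Cd ^ σb * (I₀ + 1) / c^2 * R ^ (-(2:ℝ)) * Real.exp (-(c/4) * R / (T-t)) := by
        rw [hR2]
        have h9 : I₀ ≤ I₀ + 1 := by linarith
        gcongr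
end
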